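/- Let n > 2, G = C_{2^n} = ⟨a⟩, F a finite field of characteristic 2, and σ₄ the involution induced by a ↦ a^{2^{n-1}+1}. For x = Σ_{i=0}^{2^n-1} α_i a^i, the coefficient of a^{4t+2} in x·x^{σ₄} equals (α_{2(t+2^{n-3})+1} + α_{2(t+2^{n-3})+1+2^{n-1}})², indices modulo 2^n. -/

import Mathlib

open AddMonoidAlgebra

/-- The group algebra of the cyclic group of order `2^n` over `F`. -/
abbrev GA (F : Type) [Field F] (n : ℕ) := AddMonoidAlgebra F (ZMod (2^n))

/-- The ring endomorphism of `GA F n` induced by the group endomorphism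
`a^i ↦ a^(c*i)` (written additively: `i ↦ c * i`). -/
noncomputable def sigma (F : Type) [Field F] (n : ℕ) (c : ZMod (2^n)) :
    GA F n →+* GA F n :=
  AddMonoidAlgebra.mapDomainRingHom F (AddMonoidHom.mulLeft c)

/-- The augmentation map of the group algebra. -/
noncomputable def aug (F : Type) [Field F] (n : ℕ) : GA F n →+* F :=
  ((AddMonoidAlgebra.lift F F (ZMod (2^n))) 1).toRingHom

/-- The group `V(FG)` of normalized units. -/
noncomputable def V (F : Type) [Field F] (n : ℕ) : Subgroup (GA F n)ˣ :=
  (Units.map (aug F n).toMonoidHom).ker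

/-- The unitary subgroup `V_σ(FG)` of normalized units `u` with `σ(u) = u⁻¹`,
for the involution `σ` induced by `a ↦ a^c`. -/
noncomputable def Vsig (F : Type) [Field F] (n : ℕ) (c : ZMod (2^n)) :
    Subgroup (GA F n)ˣ :=
  V F n ⊓ MonoidHom.ker (Units.map (sigma F n c).toMonoidHom * MonoidHom.id _)

lemma mul_apply_univ {F : Type} [Field F] {G : Type} [AddCommGroup G] [Fintype G] [DecidableEq G]
    (f g : AddMonoidAlgebra F G) (a : G) :
    (f * g).coeff a = ∑ j : G, f.coeff (a - j) * g.coeff j := by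
  rw [AddMonoidAlgebra.mul_apply_antidiagonal f g a
    (Finset.univ.map ⟨fun j => (a - j, j), fun i j h => by simpa using congrArg Prod.snd h⟩)]
  · rw [Finset.sum_map]; rfl
  · rintro ⟨p, q⟩
    simp only [Finset.mem_map, Function.Embedding.coeFn_mk, Finset.mem_univ, true_and]
    constructor
    · rintro ⟨j, hj⟩; cases hj; simp
    · rintro h; exact ⟨q, by subst h; exact Prod.ext (add_sub_cancel_right p q) rfl⟩

lemma sigma_apply {F : Type} [Field F] (n : ℕ) (c : ZMod (2^n)) (hc : c * c = 1)
    (x : GA F n) (j : ZMod (2^n)) : (sigma F n c x).coeff j = x.coeff (c * j) := by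
  have h1 : (sigma F n c x).coeff = Finsupp.mapDomain (fun i => c * i) x.coeff := rfl
  have hinj : Function.Injective (fun i : ZMod (2^n) => c * i) := by
    intro a b h
    have := congrArg (fun z => c * z) h
    simpa [← mul_assoc, hc] using this
  have hj : j = (fun i : ZMod (2^n) => c * i) (c * j) := by
    simp [← mul_assoc, hc]
  rw [h1]
  conv_lhs => rw [hj]
  rw [Finsupp.mapDomain_apply hinj]

lemma two_torsion (m : ℕ) (d : ZMod (2^(m+1))) (h : 2 * d = 0) :
    d = 0 ∨ d = 2^m := by
  have hv : ((d.val : ℕ) : ZMod (2^(m+1))) = d := ZMod.natCast_zmod_val d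
  have hlt : d.val < 2^(m+1) := ZMod.val_lt d
  have h2 : ((2 * d.val : ℕ) : ZMod (2^(m+1))) = 0 := by push_cast [hv]; exact h
  rw [ZMod.natCast_eq_zero_iff] at h2
  obtain ⟨k, hk⟩ := h2
  have hpow : 2^(m+1) = 2 * 2^m := by ring
  have hvk : d.val = 2^m * k := by
    have : 2 * d.val = 2 * (2^m * k) := by rw [hk, hpow]; ring
    omega
  have hk2 : k < 2 := by
    by_contra hk2
    push_neg at hk2
    have : 2^m * 2 ≤ 2^m * k := Nat.mul_le_mul_left _ hk2
    have hp : 0 < 2^m := Nat.pow_pos (by norm_num)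
    omega
  interval_cases k
  · left; rw [← hv, hvk]; simp
  · right; rw [← hv, hvk]; push_cast; ring

/-- For `σ₄ : a ↦ a^{2^{n-1}+1}`: the coefficient of `a^{4t+2}` in `x ⬝ x^{σ₄}`
equals `(α_{2(t+2^{n-3})+1} + α_{2(t+2^{n-3})+1+2^{n-1}})²`, indices modulo `2^n`. -/
theorem sigma4_coeff_of_four_t_plus_two (F : Type) [Field F] [Fintype F] (hF : CharP F 2)
    (n : ℕ) (hn : 2 < n) (x : GA F n) (t : ℕ) :
    (x * sigma F n (2^(n-1) + 1) x).coeff ((4*t + 2 : ℕ) : ZMod (2^n)) =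
      (x.coeff ((2*(t + 2^(n-3)) + 1 : ℕ) : ZMod (2^n)) +
        x.coeff ((2*(t + 2^(n-3)) + 1 + 2^(n-1) : ℕ) : ZMod (2^n)))^2 := by
  haveI := hF
  obtain ⟨m, rfl⟩ : ∃ m, n = m + 3 := ⟨n - 3, by omega⟩
  simp only [show m+3-1 = m+2 from rfl, show m+3-3 = m from rfl]
  set N := 2^(m+3) with hN
  set c : ZMod N := 2^(m+2)+1 with hcdef
  set g : ZMod N := ((4*t + 2 : ℕ) : ZMod N) with hgdef
  set τ : ZMod N := (t : ZMod N) with hτ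
  have h0 : (2:ZMod N)^(m+3) = 0 := by
    have := ZMod.natCast_self (2^(m+3))
    push_cast at this
    exact this
  have hg : g = 4*τ+2 := by rw [hgdef]; push_cast; ring
  have hc : c * c = 1 := by
    rw [hcdef]; linear_combination (2^(m+1)+1 : ZMod N) * h0
  have hcg : c * g = g := by
    rw [hcdef, hg]; linear_combination (2*τ+1 : ZMod N) * h0
  set i₀ : ZMod N := ((2*(t + 2^m) + 1 : ℕ) : ZMod N) with hi₀def
  set i₁ : ZMod N := ((2*(t + 2^m) + 1 + 2^(m+2) : ℕ) : ZMod N) with hi₁def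
  have hi₀ : i₀ = 2*τ + 2^(m+1) + 1 := by rw [hi₀def]; push_cast; ring
  have hi₁ : i₁ = i₀ + 2^(m+2) := by rw [hi₁def, hi₀]; push_cast; ring
  have h1 : (1+c) * i₀ = g := by
    rw [hcdef, hi₀, hg]; linear_combination (τ + 2^m + 1 : ZMod N) * h0
  have h2 : (1+c) * i₁ = g := by
    rw [hi₁, mul_add, h1, hcdef]
    linear_combination (2^(m+1)+1 : ZMod N) * h0
  have hci₀ : c * i₀ = i₁ := by
    rw [hcdef, hi₀, hi₁, hi₀]; linear_combination (τ + 2^m : ZMod N) * h0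
  have hci₁ : c * i₁ = i₀ := by
    rw [hi₁, mul_add, hci₀, hi₁, hcdef]
    linear_combination (2^(m+1)+1 : ZMod N) * h0
  have h2pow : (2:ZMod N)^(m+2) ≠ 0 := by
    intro h
    have h' : ((2^(m+2) : ℕ) : ZMod (2^(m+3))) = 0 := by push_cast; exact h
    rw [ZMod.natCast_eq_zero_iff] at h'
    have hle := Nat.le_of_dvd (Nat.pow_pos (by norm_num)) h'
    have := Nat.pow_lt_pow_right (a := 2) (by norm_num) (show m+2 < m+3 by omega)
    omega
  have hne : i₀ ≠ i₁ := by
    intro h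
    rw [hi₁, left_eq_add] at h
    exact h2pow h
  have hclass : ∀ j : ZMod N, (1+c) * j = g → j = i₀ ∨ j = i₁ := by
    intro j hj
    have hd : (1+c) * (j - i₀) = 0 := by rw [mul_sub, hj, h1, sub_self]
    have hd2 : 2 * (j - i₀) = 0 := by
      rw [hcdef] at hd
      linear_combination (2^(m+1)+1 : ZMod N) * hd - ((2^m+1) * (j - i₀) : ZMod N) * h0
    rcases two_torsion (m+2) (j - i₀) hd2 with h | h
    · left; linear_combination h
    · right; rw [hi₁]; linear_combination h
  -- rewrite product coefficient as a sum
  rw [mul_apply_univ]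
  have hsig : ∀ j : ZMod N, (sigma F (m+3) c x).coeff j = x.coeff (c * j) := fun j =>
    sigma_apply (m+3) c hc x j
  simp only [hsig]
  -- split off the fixed points
  rw [← Finset.sum_sdiff (Finset.subset_univ ({i₀, i₁} : Finset (ZMod N)))]
  have hφφ : ∀ j : ZMod N, g - c * (g - c * j) = j := by
    intro j
    rw [mul_sub, hcg, ← mul_assoc, hc, one_mul]
    ring
  have hzero : ∑ j ∈ (Finset.univ \ {i₀, i₁} : Finset (ZMod N)), x.coeff (g - j) * x.coeff (c * j) = 0 := by
    apply Finset.sum_involution (g := fun j _ => g - c * j)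
    · intro a ha
      have hT : x.coeff (g - (g - c * a)) * x.coeff (c * (g - c * a)) = x.coeff (g - a) * x.coeff (c * a) := by
        rw [mul_sub, hcg, ← mul_assoc, hc, one_mul]
        rw [show g - (g - c * a) = c * a by ring]
        ring_nf
      rw [hT, CharTwo.add_self_eq_zero]
    · intro a ha _
      intro hfix
      have : (1+c) * a = g := by linear_combination -hfix
      rcases hclass a this with h | h <;>
        simp [h, Finset.mem_sdiff] at ha
    · intro a ha
      simp only [Finset.mem_sdiff, Finset.mem_univ, true_and, Finset.mem_insert,
        Finset.mem_singleton, not_or] at ha ⊢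
      obtain ⟨ha0, ha1⟩ := ha
      constructor
      · intro h
        apply ha0
        have := congrArg (fun z => g - c * z) h
        rw [hφφ] at this
        rw [this, hci₀]
        linear_combination hci₁ - h2
      · intro h
        apply ha1
        have := congrArg (fun z => g - c * z) h
        rw [hφφ] at this
        rw [this, hci₁]
        linear_combination hci₀ - h1
    · intro a ha
      exact hφφ a
  rw [hzero, zero_add, Finset.sum_pair hne]
  have e₀ : g - i₀ = i₁ := by linear_combination hci₀ - h1
  have e₁ : g - i₁ = i₀ := by linear_combination hci₁ - h2
  rw [e₀, e₁, hci₀, hci₁]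
  have h2F : (2 : F) = 0 := CharP.cast_eq_zero F 2
  linear_combination (-(x.coeff i₀ * x.coeff i₁)) * h2F
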